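/- arXiv:1611.06643 — 2 statements merged into one kernel-verified Lean document; each statement's English description precedes it below -/
import Mathlib

section
/- For every integer k ≥ 1, there exist permutations σ and τ of a set of 12k+6 elements such that: σ is a product of 6k+1 disjoint transpositions (with exactly 4 fixed points), τ is a product of 4k+2 disjoint 3-cycles (with no fixed points), the product σ·τ is a product of one (4k+6)-cycle and 2k disjoint 4-cycles (with no fixed points), the subgroup G generated by σ and τ acts transitively on the 12k+6 points, and moreover this action of G is primitive (it admits no nontrivial block system). -/
set_option linter.unusedSectionVars false
set_option linter.unusedVariables false

open Equiv Equiv.Perm List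

section Base
variable {α : Type*} [DecidableEq α]

theorem prod_apply_of_fixed {l : List (Perm α)} {x : α} (h : ∀ g ∈ l, g x = x) :
    l.prod x = x := by
  induction l with
  | nil => simp
  | cons a t ih =>
      simp only [List.prod_cons, Perm.mul_apply]
      rw [ih (fun g hg => h g (List.mem_cons_of_mem _ hg)), h a (List.mem_cons_self)]

theorem prod_apply_of_mem {l : List (Perm α)} (hl : l.Pairwise Perm.Disjoint)
    {g : Perm α} (hg : g ∈ l) {x : α} (hx : g x ≠ x) : l.prod x = g x := by
  induction l with
  | nil => simp at hg
  | cons a t ih =>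
      simp only [List.prod_cons, Perm.mul_apply]
      rcases List.mem_cons.mp hg with rfl | hgt
      · have ht : t.prod x = x := by
          apply prod_apply_of_fixed
          intro h hh
          rcases (List.pairwise_cons.mp hl).1 h hh x with h1 | h2
          · exact absurd h1 hx
          · exact h2
        rw [ht]
      · have ht : t.prod x = g x := ih (List.pairwise_cons.mp hl).2 hgt
        rw [ht]
        rcases (List.pairwise_cons.mp hl).1 g hgt (g x) with h1 | h2
        · exact h1
        · exact absurd (g.injective h2) hx

theorem fp3_1 {a b c : α} (hab : a ≠ b) (hac : a ≠ c) (hbc : b ≠ c) :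
    List.formPerm [a, b, c] a = b := by
  rw [List.formPerm_cons_cons, List.formPerm_pair]
  simp only [Perm.mul_apply]
  rw [Equiv.swap_apply_of_ne_of_ne hab hac, Equiv.swap_apply_left]
theorem fp3_2 {a b c : α} (hab : a ≠ b) (hac : a ≠ c) (hbc : b ≠ c) :
    List.formPerm [a, b, c] b = c := by
  rw [List.formPerm_cons_cons, List.formPerm_pair]
  simp only [Perm.mul_apply]
  rw [Equiv.swap_apply_left, Equiv.swap_apply_of_ne_of_ne (Ne.symm hac) (Ne.symm hbc)]
theorem fp3_3 {a b c : α} (hab : a ≠ b) (hac : a ≠ c) (hbc : b ≠ c) :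
    List.formPerm [a, b, c] c = a := by
  rw [List.formPerm_cons_cons, List.formPerm_pair]
  simp only [Perm.mul_apply]
  rw [Equiv.swap_apply_right, Equiv.swap_apply_right]

theorem fp4_1 {a b c d : α} (hab : a ≠ b) (hac : a ≠ c) (had : a ≠ d) (hbc : b ≠ c)
    (hbd : b ≠ d) (hcd : c ≠ d) : List.formPerm [a, b, c, d] a = b := by
  rw [List.formPerm_cons_cons, List.formPerm_cons_cons, List.formPerm_pair]
  simp only [Perm.mul_apply]
  rw [Equiv.swap_apply_of_ne_of_ne hac had, Equiv.swap_apply_of_ne_of_ne hab hac,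
    Equiv.swap_apply_left]
theorem fp4_2 {a b c d : α} (hab : a ≠ b) (hac : a ≠ c) (had : a ≠ d) (hbc : b ≠ c)
    (hbd : b ≠ d) (hcd : c ≠ d) : List.formPerm [a, b, c, d] b = c := by
  rw [List.formPerm_cons_cons, List.formPerm_cons_cons, List.formPerm_pair]
  simp only [Perm.mul_apply]
  rw [Equiv.swap_apply_of_ne_of_ne hbc hbd, Equiv.swap_apply_left,
    Equiv.swap_apply_of_ne_of_ne (Ne.symm hac) (Ne.symm hbc)]
theorem fp4_3 {a b c d : α} (hab : a ≠ b) (hac : a ≠ c) (had : a ≠ d) (hbc : b ≠ c)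
    (hbd : b ≠ d) (hcd : c ≠ d) : List.formPerm [a, b, c, d] c = d := by
  rw [List.formPerm_cons_cons, List.formPerm_cons_cons, List.formPerm_pair]
  simp only [Perm.mul_apply]
  rw [Equiv.swap_apply_left, Equiv.swap_apply_of_ne_of_ne (Ne.symm hbd) (Ne.symm hcd),
    Equiv.swap_apply_of_ne_of_ne (Ne.symm had) (Ne.symm hbd)]
theorem fp4_4 {a b c d : α} (hab : a ≠ b) (hac : a ≠ c) (had : a ≠ d) (hbc : b ≠ c)
    (hbd : b ≠ d) (hcd : c ≠ d) : List.formPerm [a, b, c, d] d = a := by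
  rw [List.formPerm_cons_cons, List.formPerm_cons_cons, List.formPerm_pair]
  simp only [Perm.mul_apply]
  rw [Equiv.swap_apply_right, Equiv.swap_apply_right, Equiv.swap_apply_right]

end Base
namespace Stmt13

variable (k : ℕ)

def pt (m : ℕ) : Fin (12*k+6) := ⟨m % (12*k+6), Nat.mod_lt _ (by omega)⟩

theorem pt_val {m : ℕ} (h : m < 12*k+6) : (pt k m).val = m := Nat.mod_eq_of_lt h

theorem pt_val_self (x : Fin (12*k+6)) : pt k x.val = x := by
  apply Fin.ext; exact pt_val k x.isLt

theorem pt_inj {a b : ℕ} (ha : a < 12*k+6) (hb : b < 12*k+6) (h : pt k a = pt k b) :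
    a = b := by
  have := congrArg Fin.val h
  rwa [pt_val k ha, pt_val k hb] at this

theorem pt_ne {a b : ℕ} (ha : a < 12*k+6) (hb : b < 12*k+6) (h : a ≠ b) :
    pt k a ≠ pt k b := fun hc => h (pt_inj k ha hb hc)

def sigL : List (Equiv.Perm (Fin (12*k+6))) :=
  ((List.range (4*k+1)).map fun i => Equiv.swap (pt k (3*i+2)) (pt k (3*i+3))) ++
  ((List.range (2*k)).map fun i => Equiv.swap (pt k (3*i+4)) (pt k (12*k+4-3*i)))

def sigma : Equiv.Perm (Fin (12*k+6)) := (sigL k).prod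

def triN (i : ℕ) : List ℕ := [3*i, 3*i+1, 3*i+2]

def triL : List (Equiv.Perm (Fin (12*k+6))) :=
  (List.range (4*k+2)).map fun i => List.formPerm ((triN i).map (pt k))

def tau : Equiv.Perm (Fin (12*k+6)) := (triL k).prod

def fourN (i : ℕ) : List ℕ := [3*i+4, 3*i+6, 12*k+1-3*i, 12*k+3-3*i]

def fourL : List (Equiv.Perm (Fin (12*k+6))) :=
  (List.range (2*k)).map fun i => List.formPerm ((fourN k i).map (pt k))

def fourP : Equiv.Perm (Fin (12*k+6)) := (fourL k).prod

def bigN : List ℕ := [0, 1, 3, 12*k+4, 12*k+5] ++ (List.range (4*k+1)).map fun t => 12*k+2-3*t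

def bigP : Equiv.Perm (Fin (12*k+6)) := ((bigN k).map (pt k)).formPerm

def cperm : Equiv.Perm (Fin (12*k+6)) := bigP k * fourP k

theorem mem_map_pt {l : List ℕ} (hb : ∀ a ∈ l, a < 12*k+6) {x : Fin (12*k+6)} :
    x ∈ l.map (pt k) ↔ x.val ∈ l := by
  constructor
  · intro hm
    obtain ⟨a, ha, rfl⟩ := List.mem_map.mp hm
    rwa [pt_val k (hb a ha)]
  · intro hv
    have : pt k x.val ∈ l.map (pt k) := List.mem_map.mpr ⟨x.val, hv, rfl⟩
    rwa [pt_val_self] at this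

theorem nodup_map_pt {l : List ℕ} (hb : ∀ a ∈ l, a < 12*k+6) (h : l.Nodup) :
    (l.map (pt k)).Nodup :=
  h.map_on fun a ha b hb' hab => pt_inj k (hb a ha) (hb b hb') hab

theorem fp_map_fix {l : List ℕ} (hb : ∀ a ∈ l, a < 12*k+6) {x : Fin (12*k+6)}
    (hx : x.val ∉ l) : (l.map (pt k)).formPerm x = x :=
  List.formPerm_apply_of_notMem (fun hm => hx ((mem_map_pt k hb).mp hm))

theorem swap_pt_fix {a b : ℕ} (ha : a < 12*k+6) (hb : b < 12*k+6) {x : Fin (12*k+6)}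
    (hxa : x.val ≠ a) (hxb : x.val ≠ b) : Equiv.swap (pt k a) (pt k b) x = x := by
  apply Equiv.swap_apply_of_ne_of_ne
  · intro hc; exact hxa (by rw [hc, pt_val k ha])
  · intro hc; exact hxb (by rw [hc, pt_val k hb])

theorem disj_swap_swap {a b a' b' : ℕ} (ha : a < 12*k+6) (hb : b < 12*k+6)
    (ha' : a' < 12*k+6) (hb' : b' < 12*k+6)
    (h1 : a ≠ a') (h2 : a ≠ b') (h3 : b ≠ a') (h4 : b ≠ b') :
    (Equiv.swap (pt k a) (pt k b)).Disjoint (Equiv.swap (pt k a') (pt k b')) := by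
  intro x
  by_cases hxa : x.val = a
  · right
    apply swap_pt_fix k ha' hb' (by omega) (by omega)
  by_cases hxb : x.val = b
  · right
    apply swap_pt_fix k ha' hb' (by omega) (by omega)
  · left
    exact swap_pt_fix k ha hb hxa hxb

theorem disj_fp_fp {l1 l2 : List ℕ} (hb1 : ∀ a ∈ l1, a < 12*k+6)
    (hb2 : ∀ a ∈ l2, a < 12*k+6) (h : ∀ a ∈ l1, a ∉ l2) :
    (List.formPerm (l1.map (pt k))).Disjoint (List.formPerm (l2.map (pt k))) := by
  intro x
  by_cases hm : x.val ∈ l1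
  · right
    exact fp_map_fix k hb2 (h x.val hm)
  · left
    exact fp_map_fix k hb1 hm

end Stmt13
namespace Stmt13
variable (k : ℕ)

theorem triN_lt {i : ℕ} (hi : i < 4*k+2) : ∀ a ∈ triN i, a < 12*k+6 := by
  intro a ha; simp [triN] at ha; omega

theorem fourN_lt {i : ℕ} (hi : i < 2*k) : ∀ a ∈ fourN k i, a < 12*k+6 := by
  intro a ha; simp [fourN] at ha; omega

theorem bigN_lt : ∀ a ∈ bigN k, a < 12*k+6 := by
  intro a ha
  simp [bigN] at ha
  rcases ha with h | h | h | h | h | ⟨t, ht, rfl⟩ <;> omega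

theorem bigN_nodup : (bigN k).Nodup := by
  rw [bigN, List.nodup_append]
  refine ⟨by simp, ?_, ?_⟩
  · apply List.Nodup.map_on _ List.nodup_range
    intro t ht t' ht' h
    simp [List.mem_range] at ht ht'
    omega
  · intro a ha b hb
    simp at ha
    obtain ⟨t, ht, rfl⟩ := List.mem_map.mp hb
    simp [List.mem_range] at ht
    rcases ha with h | h | h | h | h <;> omega

theorem bigL_length : ((bigN k).map (pt k)).length = 4*k+6 := by
  simp [bigN]

theorem bigL_nodup : ((bigN k).map (pt k)).Nodup :=
  nodup_map_pt k (bigN_lt k) (bigN_nodup k)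

theorem sigL_pairwise : (sigL k).Pairwise Equiv.Perm.Disjoint := by
  rw [sigL, List.pairwise_append]
  refine ⟨?_, ?_, ?_⟩
  · rw [List.pairwise_iff_getElem]
    intro i j hi hj hij
    simp only [List.length_map, List.length_range] at hi hj
    simp only [List.getElem_map, List.getElem_range]
    exact disj_swap_swap k (by omega) (by omega) (by omega) (by omega)
      (by omega) (by omega) (by omega) (by omega)
  · rw [List.pairwise_iff_getElem]
    intro i j hi hj hij
    simp only [List.length_map, List.length_range] at hi hj
    simp only [List.getElem_map, List.getElem_range]
    exact disj_swap_swap k (by omega) (by omega) (by omega) (by omega)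
      (by omega) (by omega) (by omega) (by omega)
  · intro g hg g' hg'
    obtain ⟨i, hi, rfl⟩ := List.mem_map.mp hg
    obtain ⟨j, hj, rfl⟩ := List.mem_map.mp hg'
    simp [List.mem_range] at hi hj
    exact disj_swap_swap k (by omega) (by omega) (by omega) (by omega)
      (by omega) (by omega) (by omega) (by omega)

theorem triL_pairwise : (triL k).Pairwise Equiv.Perm.Disjoint := by
  rw [triL, List.pairwise_iff_getElem]
  intro i j hi hj hij
  simp only [List.length_map, List.length_range] at hi hj
  simp only [List.getElem_map, List.getElem_range]
  apply disj_fp_fp k (triN_lt k (by omega)) (triN_lt k (by omega))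
  intro a ha hb
  simp [triN] at ha hb
  omega

theorem fourL_pairwise : (fourL k).Pairwise Equiv.Perm.Disjoint := by
  rw [fourL, List.pairwise_iff_getElem]
  intro i j hi hj hij
  simp only [List.length_map, List.length_range] at hi hj
  simp only [List.getElem_map, List.getElem_range]
  apply disj_fp_fp k (fourN_lt k (by omega)) (fourN_lt k (by omega))
  intro a ha hb
  simp [fourN] at ha hb
  omega

theorem big_disj_four : ∀ g ∈ fourL k, (bigP k).Disjoint g := by
  intro g hg
  obtain ⟨i, hi, rfl⟩ := List.mem_map.mp hg
  simp [List.mem_range] at hi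
  apply disj_fp_fp k (bigN_lt k) (fourN_lt k hi)
  intro a ha hb
  simp [bigN] at ha
  simp [fourN] at hb
  rcases ha with h | h | h | h | h | ⟨t, ht, rfl⟩ <;> omega

theorem cL_pairwise : (bigP k :: fourL k).Pairwise Equiv.Perm.Disjoint :=
  List.pairwise_cons.mpr ⟨big_disj_four k, fourL_pairwise k⟩

end Stmt13
namespace Stmt13
variable (k : ℕ)

/-! ### sigma evaluation -/

theorem sg1 {i A B : ℕ} (hi : i ≤ 4*k) (hA : A = 3*i+2) (hB : B = 3*i+3) :
    sigma k (pt k A) = pt k B := by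
  subst hA hB
  have hmem : Equiv.swap (pt k (3*i+2)) (pt k (3*i+3)) ∈ sigL k :=
    List.mem_append_left _ (List.mem_map.mpr ⟨i, List.mem_range.mpr (by omega), rfl⟩)
  rw [sigma, prod_apply_of_mem (sigL_pairwise k) hmem
    (by rw [Equiv.swap_apply_left]; exact pt_ne k (by omega) (by omega) (by omega)),
    Equiv.swap_apply_left]

theorem sg2 {i A B : ℕ} (hi : i ≤ 4*k) (hA : A = 3*i+3) (hB : B = 3*i+2) :
    sigma k (pt k A) = pt k B := by
  subst hA hB
  have hmem : Equiv.swap (pt k (3*i+2)) (pt k (3*i+3)) ∈ sigL k :=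
    List.mem_append_left _ (List.mem_map.mpr ⟨i, List.mem_range.mpr (by omega), rfl⟩)
  rw [sigma, prod_apply_of_mem (sigL_pairwise k) hmem
    (by rw [Equiv.swap_apply_right]; exact pt_ne k (by omega) (by omega) (by omega)),
    Equiv.swap_apply_right]

theorem sg3 {i A B : ℕ} (hi : i < 2*k) (hA : A = 3*i+4) (hB : B = 12*k+4-3*i) :
    sigma k (pt k A) = pt k B := by
  subst hA hB
  have hmem : Equiv.swap (pt k (3*i+4)) (pt k (12*k+4-3*i)) ∈ sigL k :=
    List.mem_append_right _ (List.mem_map.mpr ⟨i, List.mem_range.mpr (by omega), rfl⟩)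
  rw [sigma, prod_apply_of_mem (sigL_pairwise k) hmem
    (by rw [Equiv.swap_apply_left]; exact pt_ne k (by omega) (by omega) (by omega)),
    Equiv.swap_apply_left]

theorem sg4 {i A B : ℕ} (hi : i < 2*k) (hA : A = 12*k+4-3*i) (hB : B = 3*i+4) :
    sigma k (pt k A) = pt k B := by
  subst hA hB
  have hmem : Equiv.swap (pt k (3*i+4)) (pt k (12*k+4-3*i)) ∈ sigL k :=
    List.mem_append_right _ (List.mem_map.mpr ⟨i, List.mem_range.mpr (by omega), rfl⟩)
  rw [sigma, prod_apply_of_mem (sigL_pairwise k) hmem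
    (by rw [Equiv.swap_apply_right]; exact pt_ne k (by omega) (by omega) (by omega)),
    Equiv.swap_apply_right]

theorem sg_fix {A : ℕ} (h : A = 0 ∨ A = 1 ∨ A = 6*k+4 ∨ A = 12*k+5) :
    sigma k (pt k A) = pt k A := by
  rw [sigma]
  apply prod_apply_of_fixed
  intro g hg
  rcases List.mem_append.mp hg with hg1 | hg2
  · obtain ⟨i, hi, rfl⟩ := List.mem_map.mp hg1
    simp only [List.mem_range] at hi
    exact swap_pt_fix k (by omega) (by omega)
      (by rw [pt_val k (by omega)]; omega) (by rw [pt_val k (by omega)]; omega)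
  · obtain ⟨i, hi, rfl⟩ := List.mem_map.mp hg2
    simp only [List.mem_range] at hi
    exact swap_pt_fix k (by omega) (by omega)
      (by rw [pt_val k (by omega)]; omega) (by rw [pt_val k (by omega)]; omega)

/-! ### tau evaluation -/

theorem tri_eq (i : ℕ) :
    (triN i).map (pt k) = [pt k (3*i), pt k (3*i+1), pt k (3*i+2)] := by
  simp [triN]

theorem tg0 {i A B : ℕ} (hi : i ≤ 4*k+1) (hA : A = 3*i) (hB : B = 3*i+1) :
    tau k (pt k A) = pt k B := by
  subst hA hB
  have hmem : List.formPerm ((triN i).map (pt k)) ∈ triL k :=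
    List.mem_map.mpr ⟨i, List.mem_range.mpr (by omega), rfl⟩
  have h1 : List.formPerm ((triN i).map (pt k)) (pt k (3*i)) = pt k (3*i+1) := by
    rw [tri_eq]
    exact fp3_1 (pt_ne k (by omega) (by omega) (by omega))
      (pt_ne k (by omega) (by omega) (by omega)) (pt_ne k (by omega) (by omega) (by omega))
  rw [tau, prod_apply_of_mem (triL_pairwise k) hmem
    (by rw [h1]; exact pt_ne k (by omega) (by omega) (by omega)), h1]

theorem tg1 {i A B : ℕ} (hi : i ≤ 4*k+1) (hA : A = 3*i+1) (hB : B = 3*i+2) :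
    tau k (pt k A) = pt k B := by
  subst hA hB
  have hmem : List.formPerm ((triN i).map (pt k)) ∈ triL k :=
    List.mem_map.mpr ⟨i, List.mem_range.mpr (by omega), rfl⟩
  have h1 : List.formPerm ((triN i).map (pt k)) (pt k (3*i+1)) = pt k (3*i+2) := by
    rw [tri_eq]
    exact fp3_2 (pt_ne k (by omega) (by omega) (by omega))
      (pt_ne k (by omega) (by omega) (by omega)) (pt_ne k (by omega) (by omega) (by omega))
  rw [tau, prod_apply_of_mem (triL_pairwise k) hmem
    (by rw [h1]; exact pt_ne k (by omega) (by omega) (by omega)), h1]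

theorem tg2 {i A B : ℕ} (hi : i ≤ 4*k+1) (hA : A = 3*i+2) (hB : B = 3*i) :
    tau k (pt k A) = pt k B := by
  subst hA hB
  have hmem : List.formPerm ((triN i).map (pt k)) ∈ triL k :=
    List.mem_map.mpr ⟨i, List.mem_range.mpr (by omega), rfl⟩
  have h1 : List.formPerm ((triN i).map (pt k)) (pt k (3*i+2)) = pt k (3*i) := by
    rw [tri_eq]
    exact fp3_3 (pt_ne k (by omega) (by omega) (by omega))
      (pt_ne k (by omega) (by omega) (by omega)) (pt_ne k (by omega) (by omega) (by omega))
  rw [tau, prod_apply_of_mem (triL_pairwise k) hmem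
    (by rw [h1]; exact pt_ne k (by omega) (by omega) (by omega)), h1]

theorem tgi0 {i A B : ℕ} (hi : i ≤ 4*k+1) (hA : A = 3*i+1) (hB : B = 3*i) :
    (tau k)⁻¹ (pt k A) = pt k B := by
  rw [← tg0 k hi rfl (hA.trans rfl), Equiv.Perm.inv_def, Equiv.symm_apply_apply, hB]

theorem tgi1 {i A B : ℕ} (hi : i ≤ 4*k+1) (hA : A = 3*i+2) (hB : B = 3*i+1) :
    (tau k)⁻¹ (pt k A) = pt k B := by
  rw [← tg1 k hi rfl (hA.trans rfl), Equiv.Perm.inv_def, Equiv.symm_apply_apply, hB]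

theorem tgi2 {i A B : ℕ} (hi : i ≤ 4*k+1) (hA : A = 3*i) (hB : B = 3*i+2) :
    (tau k)⁻¹ (pt k A) = pt k B := by
  rw [← tg2 k hi rfl (hA.trans rfl), Equiv.Perm.inv_def, Equiv.symm_apply_apply, hB]

theorem t_lt (x : Fin (12*k+6)) : x.val / 3 ≤ 4*k+1 := by
  have := x.isLt; omega

/-! ### fourP evaluation -/

theorem four_eq (i : ℕ) :
    (fourN k i).map (pt k) =
      [pt k (3*i+4), pt k (3*i+6), pt k (12*k+1-3*i), pt k (12*k+3-3*i)] := by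
  simp [fourN]

theorem four_nes {i : ℕ} (hi : i < 2*k) :
    pt k (3*i+4) ≠ pt k (3*i+6) ∧ pt k (3*i+4) ≠ pt k (12*k+1-3*i) ∧
    pt k (3*i+4) ≠ pt k (12*k+3-3*i) ∧ pt k (3*i+6) ≠ pt k (12*k+1-3*i) ∧
    pt k (3*i+6) ≠ pt k (12*k+3-3*i) ∧ pt k (12*k+1-3*i) ≠ pt k (12*k+3-3*i) :=
  ⟨pt_ne k (by omega) (by omega) (by omega), pt_ne k (by omega) (by omega) (by omega),
   pt_ne k (by omega) (by omega) (by omega), pt_ne k (by omega) (by omega) (by omega),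
   pt_ne k (by omega) (by omega) (by omega), pt_ne k (by omega) (by omega) (by omega)⟩

theorem fg1 {i A B : ℕ} (hi : i < 2*k) (hA : A = 3*i+4) (hB : B = 3*i+6) :
    fourP k (pt k A) = pt k B := by
  subst hA hB
  obtain ⟨n1, n2, n3, n4, n5, n6⟩ := four_nes k hi
  have hmem : List.formPerm ((fourN k i).map (pt k)) ∈ fourL k :=
    List.mem_map.mpr ⟨i, List.mem_range.mpr (by omega), rfl⟩
  have h1 : List.formPerm ((fourN k i).map (pt k)) (pt k (3*i+4)) = pt k (3*i+6) := by
    rw [four_eq]; exact fp4_1 n1 n2 n3 n4 n5 n6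
  rw [fourP, prod_apply_of_mem (fourL_pairwise k) hmem (by rw [h1]; exact n1.symm), h1]

theorem fg2 {i A B : ℕ} (hi : i < 2*k) (hA : A = 3*i+6) (hB : B = 12*k+1-3*i) :
    fourP k (pt k A) = pt k B := by
  subst hA hB
  obtain ⟨n1, n2, n3, n4, n5, n6⟩ := four_nes k hi
  have hmem : List.formPerm ((fourN k i).map (pt k)) ∈ fourL k :=
    List.mem_map.mpr ⟨i, List.mem_range.mpr (by omega), rfl⟩
  have h1 : List.formPerm ((fourN k i).map (pt k)) (pt k (3*i+6)) = pt k (12*k+1-3*i) := by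
    rw [four_eq]; exact fp4_2 n1 n2 n3 n4 n5 n6
  rw [fourP, prod_apply_of_mem (fourL_pairwise k) hmem (by rw [h1]; exact n4.symm), h1]

theorem fg3 {i A B : ℕ} (hi : i < 2*k) (hA : A = 12*k+1-3*i) (hB : B = 12*k+3-3*i) :
    fourP k (pt k A) = pt k B := by
  subst hA hB
  obtain ⟨n1, n2, n3, n4, n5, n6⟩ := four_nes k hi
  have hmem : List.formPerm ((fourN k i).map (pt k)) ∈ fourL k :=
    List.mem_map.mpr ⟨i, List.mem_range.mpr (by omega), rfl⟩
  have h1 : List.formPerm ((fourN k i).map (pt k)) (pt k (12*k+1-3*i)) = pt k (12*k+3-3*i) := by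
    rw [four_eq]; exact fp4_3 n1 n2 n3 n4 n5 n6
  rw [fourP, prod_apply_of_mem (fourL_pairwise k) hmem (by rw [h1]; exact n6.symm), h1]

theorem fg4 {i A B : ℕ} (hi : i < 2*k) (hA : A = 12*k+3-3*i) (hB : B = 3*i+4) :
    fourP k (pt k A) = pt k B := by
  subst hA hB
  obtain ⟨n1, n2, n3, n4, n5, n6⟩ := four_nes k hi
  have hmem : List.formPerm ((fourN k i).map (pt k)) ∈ fourL k :=
    List.mem_map.mpr ⟨i, List.mem_range.mpr (by omega), rfl⟩
  have h1 : List.formPerm ((fourN k i).map (pt k)) (pt k (12*k+3-3*i)) = pt k (3*i+4) := by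
    rw [four_eq]; exact fp4_4 n1 n2 n3 n4 n5 n6
  rw [fourP, prod_apply_of_mem (fourL_pairwise k) hmem
    (by rw [h1]; exact n3), h1]

theorem f_fix {A : ℕ} (hA : A < 12*k+6)
    (h : A % 3 = 2 ∨ (A % 3 = 1 ∧ (A < 4 ∨ 12*k+1 < A)) ∨ (A % 3 = 0 ∧ (A < 6 ∨ 12*k+3 < A))) :
    fourP k (pt k A) = pt k A := by
  rw [fourP]
  apply prod_apply_of_fixed
  intro g hg
  obtain ⟨i, hi, rfl⟩ := List.mem_map.mp hg
  simp only [List.mem_range] at hi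
  apply fp_map_fix k (fourN_lt k hi)
  rw [pt_val k hA]
  simp [fourN]
  rcases h with h' | ⟨h1, h2⟩ | ⟨h1, h2⟩ <;> omega

/-! ### bigP evaluation -/

theorem big_get_lo {i v : ℕ} (h : i < 5)
    (hv : (i = 0 ∧ v = 0) ∨ (i = 1 ∧ v = 1) ∨ (i = 2 ∧ v = 3) ∨
          (i = 3 ∧ v = 12*k+4) ∨ (i = 4 ∧ v = 12*k+5)) :
    ((bigN k).map (pt k))[i]'(by rw [bigL_length]; omega) = pt k v := by
  rcases hv with ⟨rfl, rfl⟩ | ⟨rfl, rfl⟩ | ⟨rfl, rfl⟩ | ⟨rfl, rfl⟩ | ⟨rfl, rfl⟩ <;>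
    simp [bigN]

theorem big_get_hi {t : ℕ} (h : t < 4*k+1) :
    ((bigN k).map (pt k))[5+t]'(by rw [bigL_length]; omega) = pt k (12*k+2-3*t) := by
  rw [List.getElem_map]
  congr 1
  simp only [bigN]
  rw [List.getElem_append_right (by simp)]
  simp

theorem big_step (i : ℕ) (h : i + 1 < 4*k+6) :
    bigP k (((bigN k).map (pt k))[i]'(by rw [bigL_length]; omega)) =
      ((bigN k).map (pt k))[i+1]'(by rw [bigL_length]; omega) := by
  rw [bigP, List.formPerm_apply_getElem _ (bigL_nodup k) i (by rw [bigL_length]; omega)]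
  congr 1
  rw [bigL_length]
  exact Nat.mod_eq_of_lt h

end Stmt13
namespace Stmt13
variable (k : ℕ)

theorem getElem_idx_eq {α : Type*} (l : List α) {i j : ℕ} (hi : i < l.length) (h : i = j) :
    l[i]'hi = l[j]'(h ▸ hi) := by subst h; rfl

theorem big_get {i : ℕ} (hilt : i < 4*k+6) {v : ℕ}
    (hv : (i = 0 ∧ v = 0) ∨ (i = 1 ∧ v = 1) ∨ (i = 2 ∧ v = 3) ∨
          (i = 3 ∧ v = 12*k+4) ∨ (i = 4 ∧ v = 12*k+5) ∨ (5 ≤ i ∧ v = 12*k+2-3*(i-5))) :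
    ((bigN k).map (pt k))[i]'(by rw [bigL_length]; omega) = pt k v := by
  rcases hv with ⟨rfl, rfl⟩ | ⟨rfl, rfl⟩ | ⟨rfl, rfl⟩ | ⟨rfl, rfl⟩ | ⟨rfl, rfl⟩ | ⟨h5, rfl⟩
  · simp [bigN]
  · simp [bigN]
  · simp [bigN]
  · simp [bigN]
  · simp [bigN]
  · rw [getElem_idx_eq _ _ (show i = 5+(i-5) by omega)]
    rw [List.getElem_map]
    congr 1
    simp only [bigN]
    rw [List.getElem_append_right (by simp)]
    simp

theorem big_move {i v w : ℕ} (hilt : i + 1 < 4*k+6)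
    (hv : (i = 0 ∧ v = 0) ∨ (i = 1 ∧ v = 1) ∨ (i = 2 ∧ v = 3) ∨
          (i = 3 ∧ v = 12*k+4) ∨ (i = 4 ∧ v = 12*k+5) ∨ (5 ≤ i ∧ v = 12*k+2-3*(i-5)))
    (hw : (i+1 = 1 ∧ w = 1) ∨ (i+1 = 2 ∧ w = 3) ∨
          (i+1 = 3 ∧ w = 12*k+4) ∨ (i+1 = 4 ∧ w = 12*k+5) ∨ (5 ≤ i+1 ∧ w = 12*k+2-3*(i+1-5))) :
    bigP k (pt k v) = pt k w := by
  rw [← big_get k (by omega) hv, big_step k i hilt]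
  exact big_get k (i := i+1) (v := w) (by omega) (by omega)

theorem bg_last : bigP k (pt k 2) = pt k 0 := by
  have h1 := big_get k (i := 5+4*k) (v := 2) (by omega) (by omega)
  rw [← h1, bigP,
    List.formPerm_apply_getElem _ (bigL_nodup k) (5+4*k) (by rw [bigL_length]; omega)]
  have h3 : (5+4*k+1) % ((bigN k).map (pt k)).length = 0 := by
    rw [bigL_length, show 5+4*k+1 = 4*k+6 from by omega, Nat.mod_self]
  rw [getElem_idx_eq _ _ h3]
  exact big_get k (i := 0) (v := 0) (by omega) (by omega)

theorem big_fix {A : ℕ} (hA : A < 12*k+6)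
    (h : A % 3 ≠ 2 ∧ A ≠ 0 ∧ A ≠ 1 ∧ A ≠ 3 ∧ A ≠ 12*k+4) :
    bigP k (pt k A) = pt k A := by
  apply fp_map_fix k (bigN_lt k)
  rw [pt_val k hA]
  intro hmem
  simp only [bigN, List.mem_append, List.mem_cons, List.not_mem_nil, List.mem_map,
    List.mem_range] at hmem
  rcases hmem with (h'|h'|h'|h'|h'|h') | ⟨t, ht, rfl⟩ <;> first | exact h' | omega

end Stmt13
namespace Stmt13
variable (k : ℕ)

theorem bg_last' {A : ℕ} (hA : A = 2) : bigP k (pt k A) = pt k 0 := by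
  subst hA; exact bg_last k

theorem mul_eq (hk : 1 ≤ k) : sigma k * tau k = cperm k := by
  apply Equiv.ext
  intro x
  obtain ⟨a, ha, rfl⟩ : ∃ a, a < 12*k+6 ∧ pt k a = x := ⟨x.val, x.isLt, pt_val_self k x⟩
  rw [Equiv.Perm.mul_apply, cperm, Equiv.Perm.mul_apply]
  obtain ⟨q, hq, hqa⟩ : ∃ q, q ≤ 4*k+1 ∧ (a = 3*q ∨ a = 3*q+1 ∨ a = 3*q+2) :=
    ⟨a/3, by omega, by omega⟩
  rcases hqa with hqa | hqa | hqa <;> subst hqa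
  · -- a = 3q
    rw [tg0 k hq rfl rfl]
    rcases Nat.lt_or_ge q 1 with h1 | h1
    · rw [sg_fix k (by omega), f_fix k (by omega) (by omega),
        big_move k (i := 0) (v := 3*q) (w := 1) (by omega) (by omega) (by omega)]
      exact congrArg (pt k) (by omega)
    rcases Nat.lt_or_ge q 2 with h2 | h2
    · rw [sg3 k (i := 0) (by omega) (by omega) rfl, f_fix k (by omega) (by omega),
        big_move k (i := 2) (v := 3*q) (w := 12*k+4) (by omega) (by omega) (by omega)]
      exact congrArg (pt k) (by omega)
    rcases Nat.lt_or_ge q (2*k+1) with h3 | h3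
    · rw [sg3 k (i := q-1) (by omega) (by omega) rfl, fg2 k (i := q-2) (by omega) (by omega) rfl,
        big_fix k (by omega) (by omega)]
      exact congrArg (pt k) (by omega)
    rcases Nat.lt_or_ge q (2*k+2) with h4 | h4
    · rw [sg_fix k (by omega), fg2 k (i := 2*k-1) (by omega) (by omega) rfl,
        big_fix k (by omega) (by omega)]
      exact congrArg (pt k) (by omega)
    · rw [sg4 k (i := 4*k+1-q) (by omega) (by omega) rfl,
        fg4 k (i := 4*k+1-q) (by omega) (by omega) rfl,
        big_fix k (by omega) (by omega)]
  · -- a = 3q+1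
    rw [tg1 k hq rfl rfl]
    rcases Nat.lt_or_ge q (4*k+1) with h1 | h1
    · rw [sg1 k (i := q) (by omega) rfl rfl]
      rcases Nat.lt_or_ge q 1 with h2 | h2
      · rw [f_fix k (by omega) (by omega),
          big_move k (i := 1) (v := 3*q+1) (w := 3) (by omega) (by omega) (by omega)]
        exact congrArg (pt k) (by omega)
      rcases Nat.lt_or_ge q (2*k+1) with h3 | h3
      · rw [fg1 k (i := q-1) (by omega) (by omega) rfl, big_fix k (by omega) (by omega)]
        exact congrArg (pt k) (by omega)
      · rw [fg3 k (i := 4*k-q) (by omega) (by omega) rfl, big_fix k (by omega) (by omega)]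
        exact congrArg (pt k) (by omega)
    · rw [sg_fix k (by omega), f_fix k (by omega) (by omega),
        big_move k (i := 3) (v := 3*q+1) (w := 12*k+5) (by omega) (by omega) (by omega)]
      exact congrArg (pt k) (by omega)
  · -- a = 3q+2
    rw [tg2 k hq rfl rfl, f_fix k (A := 3*q+2) (by omega) (by omega)]
    rcases Nat.lt_or_ge q 1 with h1 | h1
    · rw [sg_fix k (by omega), bg_last' k (by omega)]
      exact congrArg (pt k) (by omega)
    rcases Nat.lt_or_ge q (4*k+1) with h2 | h2
    · rw [sg2 k (i := q-1) (by omega) (by omega) rfl,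
        big_move k (i := 5+(4*k-q)) (v := 3*q+2) (w := 3*(q-1)+2) (by omega) (by omega) (by omega)]
    · rw [sg2 k (i := 4*k) (by omega) (by omega) rfl,
        big_move k (i := 4) (v := 3*q+2) (w := 12*k+2) (by omega) (by omega) (by omega)]
      exact congrArg (pt k) (by omega)

end Stmt13
namespace Stmt13
variable (k : ℕ)

theorem sigL_cycles : ∀ g ∈ sigL k, g.IsCycle := by
  intro g hg
  rcases List.mem_append.mp hg with h | h <;> obtain ⟨i, hi, rfl⟩ := List.mem_map.mp h <;>
    simp only [List.mem_range] at hi <;>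
    exact Equiv.Perm.isCycle_swap (pt_ne k (by omega) (by omega) (by omega))

theorem sigma_cycleType : (sigma k).cycleType = Multiset.replicate (6*k+1) 2 := by
  rw [Equiv.Perm.cycleType_eq (σ := sigma k) (sigL k) rfl (sigL_cycles k) (sigL_pairwise k)]
  apply Multiset.eq_replicate.mpr
  constructor
  · simp [sigL]; omega
  · intro b hb
    obtain ⟨g, hg, rfl⟩ := List.mem_map.mp (Multiset.mem_coe.mp hb)
    rcases List.mem_append.mp hg with h | h <;> obtain ⟨i, hi, rfl⟩ := List.mem_map.mp h <;>
      simp only [List.mem_range] at hi <;>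
      exact Equiv.Perm.card_support_swap (pt_ne k (by omega) (by omega) (by omega))

theorem triL_nodup {i : ℕ} (hi : i < 4*k+2) : ((triN i).map (pt k)).Nodup := by
  apply nodup_map_pt k (triN_lt k hi)
  simp [triN]

theorem triL_cycles : ∀ g ∈ triL k, g.IsCycle := by
  intro g hg
  obtain ⟨i, hi, rfl⟩ := List.mem_map.mp hg
  simp only [List.mem_range] at hi
  exact List.isCycle_formPerm (triL_nodup k hi) (by simp [triN])

theorem tau_cycleType : (tau k).cycleType = Multiset.replicate (4*k+2) 3 := by
  rw [Equiv.Perm.cycleType_eq (σ := tau k) (triL k) rfl (triL_cycles k) (triL_pairwise k)]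
  apply Multiset.eq_replicate.mpr
  constructor
  · simp [triL]
  · intro b hb
    obtain ⟨g, hg, rfl⟩ := List.mem_map.mp (Multiset.mem_coe.mp hb)
    obtain ⟨i, hi, rfl⟩ := List.mem_map.mp hg
    simp only [List.mem_range] at hi
    simp only [Function.comp_apply]
    rw [List.support_formPerm_of_nodup _ (triL_nodup k hi) (by simp [triN]),
      List.toFinset_card_of_nodup (triL_nodup k hi)]
    simp [triN]

theorem fourL_nodup {i : ℕ} (hi : i < 2*k) : ((fourN k i).map (pt k)).Nodup := by
  apply nodup_map_pt k (fourN_lt k hi)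
  simp [fourN]
  omega

theorem fourL_cycles : ∀ g ∈ fourL k, g.IsCycle := by
  intro g hg
  obtain ⟨i, hi, rfl⟩ := List.mem_map.mp hg
  simp only [List.mem_range] at hi
  exact List.isCycle_formPerm (fourL_nodup k hi) (by simp [fourN])

theorem cperm_cycleType :
    (cperm k).cycleType = (4*k+6) ::ₘ Multiset.replicate (2*k) 4 := by
  have hprod : (bigP k :: fourL k).prod = cperm k := by
    rw [List.prod_cons, cperm, fourP]
  rw [Equiv.Perm.cycleType_eq _ hprod
    (by
      intro g hg
      rcases List.mem_cons.mp hg with rfl | h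
      · exact List.isCycle_formPerm (bigL_nodup k) (by rw [bigL_length]; omega)
      · exact fourL_cycles k g h)
    (cL_pairwise k)]
  rw [List.map_cons]
  have hbig : (Finset.card ∘ Equiv.Perm.support) (bigP k) = 4*k+6 := by
    simp only [Function.comp_apply]
    rw [bigP, List.support_formPerm_of_nodup _ (bigL_nodup k)
        (by intro x hx; apply_fun List.length at hx; rw [bigL_length] at hx; simp at hx),
      List.toFinset_card_of_nodup (bigL_nodup k), bigL_length]
  rw [hbig]
  show ((4*k+6) :: List.map _ (fourL k) : Multiset ℕ) = _
  rw [← Multiset.cons_coe]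
  congr 1
  apply Multiset.eq_replicate.mpr
  constructor
  · simp [fourL]
  · intro b hb
    obtain ⟨g, hg, rfl⟩ := List.mem_map.mp (Multiset.mem_coe.mp hb)
    obtain ⟨i, hi, rfl⟩ := List.mem_map.mp hg
    simp only [List.mem_range] at hi
    simp only [Function.comp_apply]
    rw [List.support_formPerm_of_nodup _ (fourL_nodup k hi) (by simp [fourN]),
      List.toFinset_card_of_nodup (fourL_nodup k hi)]
    simp [fourN]

theorem fix_count (g : Equiv.Perm (Fin (12*k+6))) :
    (Finset.univ.filter fun x => g x = x).card = (12*k+6) - g.support.card := by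
  have h := Finset.card_filter_add_card_filter_not
    (s := (Finset.univ : Finset (Fin (12*k+6)))) (p := fun x => g x = x)
  have hs : g.support = Finset.univ.filter (fun x => ¬ g x = x) := by
    ext z; simp [Equiv.Perm.mem_support]
  rw [← hs] at h
  have : (Finset.univ : Finset (Fin (12*k+6))).card = 12*k+6 := by simp
  omega

end Stmt13
namespace Stmt13
variable (k : ℕ)

theorem prod_pow {α : Type*} [DecidableEq α] {l : List (Equiv.Perm α)}
    (hl : l.Pairwise Commute) (m : ℕ) : l.prod ^ m = (l.map (· ^ m)).prod := by
  induction l with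
  | nil => simp
  | cons a t ih =>
      obtain ⟨h1, h2⟩ := List.pairwise_cons.mp hl
      rw [List.prod_cons, List.map_cons, List.prod_cons,
        (Commute.list_prod_right _ _ h1).mul_pow, ih h2]

theorem fourP_pow4 : fourP k ^ 4 = 1 := by
  rw [fourP, prod_pow (l := fourL k) ((fourL_pairwise k).imp fun h => h.commute)]
  apply List.prod_eq_one
  intro x hx
  obtain ⟨g, hg, rfl⟩ := List.mem_map.mp hx
  obtain ⟨i, hi, rfl⟩ := List.mem_map.mp hg
  simp only [List.mem_range] at hi
  have h := List.formPerm_pow_length_eq_one_of_nodup _ (fourL_nodup k hi)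
  rwa [show ((fourN k i).map (pt k)).length = 4 from by simp [fourN]] at h

theorem bigP_pow : bigP k ^ (4*k+6) = 1 := by
  have h := List.formPerm_pow_length_eq_one_of_nodup _ (bigL_nodup k)
  rwa [bigL_length] at h

theorem disj_big_fourP : (bigP k).Disjoint (fourP k) :=
  Equiv.Perm.disjoint_prod_right _ (big_disj_four k)

theorem upow_eq : (sigma k * tau k) ^ (4*k+6) = fourP k ^ 2 → True := fun _ => trivial

theorem cpow_eq (hk : 1 ≤ k) : (sigma k * tau k) ^ (4*k+6) = fourP k ^ 2 := by
  rw [mul_eq k hk, cperm, (disj_big_fourP k).commute.mul_pow, bigP_pow k,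
    show 4*k+6 = 4*(k+1)+2 from by omega, pow_add, pow_mul, fourP_pow4 k]
  simp

/-! ### u = fourP^2 evaluation -/

theorem ug1 {j A B : ℕ} (h1 : 1 ≤ j) (h2 : j ≤ 4*k) (hA : A = 3*j+1) (hB : B = 12*k+4-3*j) :
    (fourP k ^ 2) (pt k A) = pt k B := by
  rw [pow_two, Equiv.Perm.mul_apply]
  rcases Nat.lt_or_ge j (2*k+1) with h3 | h3
  · rw [fg1 k (i := j-1) (by omega) (by omega) rfl, fg2 k (i := j-1) (by omega) (by omega) rfl]
    exact congrArg (pt k) (by omega)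
  · rw [fg3 k (i := 4*k-j) (by omega) (by omega) rfl, fg4 k (i := 4*k-j) (by omega) (by omega) rfl]
    exact congrArg (pt k) (by omega)

theorem ug0 {j A B : ℕ} (h1 : 2 ≤ j) (h2 : j ≤ 4*k+1) (hA : A = 3*j) (hB : B = 12*k+9-3*j) :
    (fourP k ^ 2) (pt k A) = pt k B := by
  rw [pow_two, Equiv.Perm.mul_apply]
  rcases Nat.lt_or_ge j (2*k+2) with h3 | h3
  · rw [fg2 k (i := j-2) (by omega) (by omega) rfl, fg3 k (i := j-2) (by omega) (by omega) rfl]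
    exact congrArg (pt k) (by omega)
  · rw [fg4 k (i := 4*k+1-j) (by omega) (by omega) rfl,
      fg1 k (i := 4*k+1-j) (by omega) (by omega) rfl]
    exact congrArg (pt k) (by omega)

theorem ufix0 : (fourP k ^ 2) (pt k 0) = pt k 0 := by
  rw [pow_two, Equiv.Perm.mul_apply, f_fix k (by omega) (by omega), f_fix k (by omega) (by omega)]

/-! ### v = tau⁻¹ * sigma * tau evaluation -/

def vperm : Equiv.Perm (Fin (12*k+6)) := (tau k)⁻¹ * sigma k * tau k

theorem vg1 {j A B : ℕ} (h2 : j ≤ 4*k) (hA : A = 3*j+1) (hB : B = 3*j+5) :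
    vperm k (pt k A) = pt k B := by
  rw [vperm, Equiv.Perm.mul_apply, Equiv.Perm.mul_apply,
    tg1 k (i := j) (by omega) hA rfl, sg1 k (i := j) (by omega) rfl rfl,
    tgi2 k (i := j+1) (B := 3*j+5) (by omega) (by omega) (by omega)]
  exact congrArg (pt k) hB.symm

theorem vg2 {j A B : ℕ} (h1 : 1 ≤ j) (h2 : j ≤ 4*k+1) (hA : A = 3*j+2) (hB : B = 3*j-2) :
    vperm k (pt k A) = pt k B := by
  rw [vperm, Equiv.Perm.mul_apply, Equiv.Perm.mul_apply,
    tg2 k (i := j) (by omega) hA rfl, sg2 k (i := j-1) (by omega) (by omega) rfl,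
    tgi1 k (i := j-1) (B := 3*j-2) (by omega) (by omega) (by omega)]
  exact congrArg (pt k) hB.symm

theorem vg0 {j A B : ℕ} (h1 : 1 ≤ j) (h2 : j ≤ 4*k+1) (hA : A = 3*j) (hB : B = 12*k+6-3*j) :
    vperm k (pt k A) = pt k B := by
  rw [vperm, Equiv.Perm.mul_apply, Equiv.Perm.mul_apply, tg0 k (i := j) (by omega) hA rfl]
  rcases Nat.lt_or_ge j (2*k+1) with h3 | h3
  · rw [sg3 k (i := j-1) (by omega) (by omega) rfl,
      tgi0 k (i := 4*k+2-j) (B := 12*k+6-3*j) (by omega) (by omega) (by omega)] <;>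
      exact congrArg (pt k) hB.symm
  rcases Nat.lt_or_ge j (2*k+2) with h4 | h4
  · rw [sg_fix k (by omega), tgi0 k (i := 2*k+1) (B := 12*k+6-3*j) (by omega) (by omega) (by omega)]
    exact congrArg (pt k) hB.symm
  · rw [sg4 k (i := 4*k+1-j) (by omega) (by omega) rfl,
      tgi0 k (i := 4*k+2-j) (B := 12*k+6-3*j) (by omega) (by omega) (by omega)] <;>
      exact congrArg (pt k) hB.symm

theorem vfix0 : vperm k (pt k 0) = pt k 0 := by
  rw [vperm, Equiv.Perm.mul_apply, Equiv.Perm.mul_apply,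
    tg0 k (i := 0) (by omega) (by omega) rfl, sg_fix k (by omega),
    tgi0 k (i := 0) (B := 0) (by omega) (by omega) (by omega)]

end Stmt13
namespace Stmt13
variable (k : ℕ)

theorem reach0 (hk : 1 ≤ k) : ∀ a, a < 12*k+6 →
    ∃ g ∈ Subgroup.closure ({sigma k, tau k} : Set (Equiv.Perm (Fin (12*k+6)))),
      g (pt k 0) = pt k a := by
  have hσ : sigma k ∈ Subgroup.closure ({sigma k, tau k} : Set (Equiv.Perm (Fin (12*k+6)))) :=
    Subgroup.subset_closure (by simp)
  have hτ : tau k ∈ Subgroup.closure ({sigma k, tau k} : Set (Equiv.Perm (Fin (12*k+6)))) :=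
    Subgroup.subset_closure (by simp)
  have main : ∀ j, j ≤ 4*k+1 →
      ∃ g ∈ Subgroup.closure ({sigma k, tau k} : Set (Equiv.Perm (Fin (12*k+6)))),
        g (pt k 0) = pt k (3*j) := by
    intro j
    induction j with
    | zero => exact fun _ => ⟨1, Subgroup.one_mem _, by simp⟩
    | succ j ih =>
        intro hj
        obtain ⟨g, hgmem, hg⟩ := ih (by omega)
        refine ⟨sigma k * tau k * tau k * g,
          mul_mem (mul_mem (mul_mem hσ hτ) hτ) hgmem, ?_⟩
        rw [Equiv.Perm.mul_apply, hg, Equiv.Perm.mul_apply, Equiv.Perm.mul_apply,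
          tg0 k (i := j) (by omega) rfl rfl, tg1 k (i := j) (by omega) rfl rfl,
          sg1 k (i := j) (by omega) rfl (B := 3*(j+1)) (by omega)]
  intro a ha
  obtain ⟨q, hq, hqa⟩ : ∃ q, q ≤ 4*k+1 ∧ (a = 3*q ∨ a = 3*q+1 ∨ a = 3*q+2) :=
    ⟨a/3, by omega, by omega⟩
  obtain ⟨g, hgmem, hg⟩ := main q hq
  rcases hqa with rfl | rfl | rfl
  · exact ⟨g, hgmem, hg⟩
  · exact ⟨tau k * g, mul_mem hτ hgmem,
      by rw [Equiv.Perm.mul_apply, hg, tg0 k (i := q) hq rfl rfl]⟩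
  · exact ⟨tau k * tau k * g, mul_mem (mul_mem hτ hτ) hgmem,
      by rw [Equiv.Perm.mul_apply, hg, Equiv.Perm.mul_apply,
        tg0 k (i := q) hq rfl rfl, tg1 k (i := q) hq rfl rfl]⟩

theorem walk (hk : 1 ≤ k) (B : Set (Fin (12*k+6)))
    (hσ : ∀ z ∈ B, sigma k z ∈ B)
    (hu : ∀ z ∈ B, (fourP k ^ 2) z ∈ B)
    (hv : ∀ z ∈ B, vperm k z ∈ B)
    (h0 : pt k 0 ∈ B) {a : ℕ} (ha : a < 12*k+6) (ha0 : a ≠ 0) (hyB : pt k a ∈ B) :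
    ∀ z : Fin (12*k+6), z ∈ B := by
  have down : ∀ j, j ≤ 4*k → 1 ≤ j → pt k (3*(j+1)) ∈ B → pt k (3*j) ∈ B := by
    intro j hj hj1 hm
    have h1 := hu _ hm
    rw [ug0 k (j := j+1) (B := 12*k+6-3*j) (by omega) (by omega) (by omega) (by omega)] at h1
    have h2 := hv _ h1
    rwa [vg0 k (j := 4*k+2-j) (B := 3*j) (by omega) (by omega) (by omega) (by omega)] at h2
  have up : ∀ j, j ≤ 4*k → 1 ≤ j → pt k (3*j) ∈ B → pt k (3*(j+1)) ∈ B := by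
    intro j hj hj1 hm
    have h1 := hv _ hm
    rw [vg0 k (j := j) (B := 12*k+6-3*j) (by omega) (by omega) rfl (by omega)] at h1
    have h2 := hu _ h1
    rwa [ug0 k (j := 4*k+2-j) (B := 3*(j+1)) (by omega) (by omega) (by omega) (by omega)] at h2
  have down3 : ∀ j, 1 ≤ j → j ≤ 4*k+1 → pt k (3*j) ∈ B → pt k 3 ∈ B := by
    intro j
    induction j with
    | zero => intro h1; exact absurd h1 (by omega)
    | succ j ih =>
        intro h1 h2 hm
        rcases Nat.lt_or_ge j 1 with hj | hj
        · have e : pt k (3*(j+1)) = pt k 3 := congrArg (pt k) (by omega)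
          rwa [e] at hm
        · exact ih (by omega) (by omega) (down j (by omega) hj hm)
  have up3 : ∀ j, 1 ≤ j → j ≤ 4*k+1 → pt k 3 ∈ B → pt k (3*j) ∈ B := by
    intro j
    induction j with
    | zero => intro h1; exact absurd h1 (by omega)
    | succ j ih =>
        intro h1 h2 hm
        rcases Nat.lt_or_ge j 1 with hj | hj
        · have e : pt k (3*(j+1)) = pt k 3 := congrArg (pt k) (by omega)
          rwa [← e] at hm
        · exact up j (by omega) hj (ih (by omega) (by omega) hm)
  have path1 : ∀ j, j ≤ 4*k-1 → pt k (3*j+1) ∈ B → pt k 3 ∈ B := by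
    intro j hj hm
    have h1 := hv _ hm
    rw [vg1 k (j := j) (by omega) rfl rfl] at h1
    have h2 := hσ _ h1
    rw [sg1 k (i := j+1) (B := 3*(j+2)) (by omega) (by omega) (by omega)] at h2
    exact down3 (j+2) (by omega) (by omega) h2
  have h3B : pt k 3 ∈ B := by
    obtain ⟨q, hq, hqa⟩ : ∃ q, q ≤ 4*k+1 ∧ (a = 3*q ∨ a = 3*q+1 ∨ a = 3*q+2) :=
      ⟨a/3, by omega, by omega⟩
    rcases hqa with rfl | rfl | rfl
    · exact down3 q (by omega) hq hyB
    · rcases Nat.lt_or_ge q (4*k) with h1 | h1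
      · exact path1 q (by omega) hyB
      rcases Nat.lt_or_ge q (4*k+1) with h2 | h2
      · have hu1 := hu _ hyB
        rw [ug1 k (j := 4*k) (B := 3*1+1) (by omega) (by omega) (by omega) (by omega)] at hu1
        exact path1 1 (by omega) hu1
      · have hs1 := hσ _ hyB
        rw [sg4 k (i := 0) (B := 3*1+1) (by omega) (by omega) (by omega)] at hs1
        exact path1 1 (by omega) hs1
    · rcases Nat.lt_or_ge q (4*k+1) with h1 | h1
      · have hs1 := hσ _ hyB
        rw [sg1 k (i := q) (B := 3*(q+1)) (by omega) (by omega) (by omega)] at hs1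
        exact down3 (q+1) (by omega) (by omega) hs1
      · have h1 := hv _ hyB
        rw [vg2 k (j := 4*k+1) (B := 3*(4*k)+1) (by omega) (by omega) (by omega) (by omega)] at h1
        have h2 := hu _ h1
        rw [ug1 k (j := 4*k) (B := 3*1+1) (by omega) (by omega) (by omega) (by omega)] at h2
        exact path1 1 (by omega) h2
  have hall3 : ∀ j, 1 ≤ j → j ≤ 4*k+1 → pt k (3*j) ∈ B := fun j h1 h2 => up3 j h1 h2 h3B
  have hall2 : ∀ j, j ≤ 4*k → pt k (3*j+2) ∈ B := by
    intro j hj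
    have := hσ _ (hall3 (j+1) (by omega) (by omega))
    rwa [sg2 k (i := j) (A := 3*(j+1)) (B := 3*j+2) (by omega) (by omega) (by omega)] at this
  have h4B : pt k (3*1+1) ∈ B := by
    have := hv _ (hall2 2 (by omega))
    rwa [vg2 k (j := 2) (B := 3*1+1) (by omega) (by omega) (by omega) (by omega)] at this
  have hall1 : ∀ j, j ≤ 4*k → pt k (3*j+1) ∈ B := by
    intro j hj
    rcases Nat.lt_or_ge j (4*k) with h1 | h1
    · have := hv _ (hall2 (j+1) (by omega))
      rwa [vg2 k (j := j+1) (B := 3*j+1) (by omega) (by omega) (by omega) (by omega)] at this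
    · have := hu _ h4B
      rwa [ug1 k (j := 1) (B := 3*j+1) (by omega) (by omega) (by omega) (by omega)] at this
  have h124 : pt k (12*k+4) ∈ B := by
    have := hσ _ (hall1 1 (by omega))
    rwa [sg3 k (i := 0) (B := 12*k+4) (by omega) (by omega) (by omega)] at this
  have h125 : pt k (12*k+5) ∈ B := by
    have := hv _ (hall1 (4*k) (by omega))
    rwa [vg1 k (j := 4*k) (B := 12*k+5) (by omega) (by omega) (by omega)] at this
  intro z
  obtain ⟨b, hb, rfl⟩ : ∃ b, b < 12*k+6 ∧ pt k b = z := ⟨z.val, z.isLt, pt_val_self k z⟩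
  obtain ⟨q, hq, hqa⟩ : ∃ q, q ≤ 4*k+1 ∧ (b = 3*q ∨ b = 3*q+1 ∨ b = 3*q+2) :=
    ⟨b/3, by omega, by omega⟩
  rcases hqa with rfl | rfl | rfl
  · rcases Nat.lt_or_ge q 1 with h1 | h1
    · have e : pt k (3*q) = pt k 0 := congrArg (pt k) (by omega)
      rwa [e]
    · exact hall3 q h1 hq
  · rcases Nat.lt_or_ge q (4*k+1) with h1 | h1
    · exact hall1 q (by omega)
    · have e : pt k (3*q+1) = pt k (12*k+4) := congrArg (pt k) (by omega)
      rwa [e]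
  · rcases Nat.lt_or_ge q (4*k+1) with h1 | h1
    · exact hall2 q (by omega)
    · have e : pt k (3*q+2) = pt k (12*k+5) := congrArg (pt k) (by omega)
      rwa [e]

end Stmt13
open Stmt13 in
/-- For every integer `k ≥ 1` there exist permutations `σ, τ` of `12k+6` points such that
`σ` is a product of `6k+1` disjoint transpositions (with exactly `4` fixed points), `τ` is a
product of `4k+2` disjoint 3-cycles (with no fixed points), `σ·τ` is a product of one
`(4k+6)`-cycle and `2k` disjoint 4-cycles (with no fixed points), the subgroup `G = ⟨σ, τ⟩`
acts transitively, and moreover the action of `G` is primitive: every block (a set mapped by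
each element of `G` either to itself or to a disjoint set) is a subsingleton or everything. -/
theorem stmt_13 (k : ℕ) (hk : 1 ≤ k) :
    ∃ σ τ : Equiv.Perm (Fin (12 * k + 6)),
      σ.cycleType = Multiset.replicate (6 * k + 1) 2 ∧
      (Finset.univ.filter fun x => σ x = x).card = 4 ∧
      τ.cycleType = Multiset.replicate (4 * k + 2) 3 ∧
      (Finset.univ.filter fun x => τ x = x).card = 0 ∧
      (σ * τ).cycleType = (4 * k + 6) ::ₘ Multiset.replicate (2 * k) 4 ∧
      (Finset.univ.filter fun x => (σ * τ) x = x).card = 0 ∧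
      (∀ x y : Fin (12 * k + 6),
        ∃ g ∈ Subgroup.closure ({σ, τ} : Set (Equiv.Perm (Fin (12 * k + 6)))), g x = y) ∧
      (∀ B : Set (Fin (12 * k + 6)),
        (∀ g ∈ Subgroup.closure ({σ, τ} : Set (Equiv.Perm (Fin (12 * k + 6)))),
          ⇑g '' B = B ∨ Disjoint (⇑g '' B) B) →
        B.Subsingleton ∨ B = Set.univ) := by
  have hσmem : sigma k ∈ Subgroup.closure ({sigma k, tau k} :
      Set (Equiv.Perm (Fin (12 * k + 6)))) := Subgroup.subset_closure (by simp)
  have hτmem : tau k ∈ Subgroup.closure ({sigma k, tau k} :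
      Set (Equiv.Perm (Fin (12 * k + 6)))) := Subgroup.subset_closure (by simp)
  have humem : fourP k ^ 2 ∈ Subgroup.closure ({sigma k, tau k} :
      Set (Equiv.Perm (Fin (12 * k + 6)))) := by
    rw [← cpow_eq k hk]
    exact pow_mem (mul_mem hσmem hτmem) _
  have hvmem : vperm k ∈ Subgroup.closure ({sigma k, tau k} :
      Set (Equiv.Perm (Fin (12 * k + 6)))) :=
    mul_mem (mul_mem (inv_mem hτmem) hσmem) hτmem
  refine ⟨sigma k, tau k, sigma_cycleType k, ?_, tau_cycleType k, ?_, ?_, ?_, ?_, ?_⟩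
  · rw [fix_count]
    have h1 := Equiv.Perm.sum_cycleType (sigma k)
    rw [sigma_cycleType k, Multiset.sum_replicate, smul_eq_mul] at h1
    omega
  · rw [fix_count]
    have h1 := Equiv.Perm.sum_cycleType (tau k)
    rw [tau_cycleType k, Multiset.sum_replicate, smul_eq_mul] at h1
    omega
  · rw [mul_eq k hk]
    exact cperm_cycleType k
  · rw [mul_eq k hk, fix_count]
    have h1 := Equiv.Perm.sum_cycleType (cperm k)
    rw [cperm_cycleType k, Multiset.sum_cons, Multiset.sum_replicate, smul_eq_mul] at h1
    omega
  · intro x y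
    obtain ⟨gx, hgx, hx⟩ := reach0 k hk x.val x.isLt
    obtain ⟨gy, hgy, hy⟩ := reach0 k hk y.val y.isLt
    rw [pt_val_self] at hx hy
    exact ⟨gy * gx⁻¹, mul_mem hgy (inv_mem hgx),
      by rw [Equiv.Perm.mul_apply, ← hx, Equiv.Perm.inv_def, Equiv.symm_apply_apply, hy]⟩
  · intro B hB
    by_cases hsub : B.Subsingleton
    · exact Or.inl hsub
    right
    obtain ⟨x, hx, y, hyB, hxy⟩ := Set.not_subsingleton_iff.mp hsub
    obtain ⟨gx, hgxmem, hgx⟩ := reach0 k hk x.val x.isLt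
    rw [pt_val_self] at hgx
    have hg0mem : gx⁻¹ ∈ Subgroup.closure ({sigma k, tau k} :
        Set (Equiv.Perm (Fin (12 * k + 6)))) := inv_mem hgxmem
    have hg0x : gx⁻¹ x = pt k 0 := by rw [← hgx, Equiv.Perm.inv_def, Equiv.symm_apply_apply]
    set B' : Set (Fin (12 * k + 6)) := (⇑gx⁻¹) '' B with hB'def
    have h0' : pt k 0 ∈ B' := ⟨x, hx, hg0x⟩
    have hB' : ∀ h ∈ Subgroup.closure ({sigma k, tau k} :
        Set (Equiv.Perm (Fin (12 * k + 6)))),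
        (⇑h) '' B' = B' ∨ Disjoint ((⇑h) '' B') B' := by
      intro h hh
      have hw : gx⁻¹⁻¹ * h * gx⁻¹ ∈ Subgroup.closure ({sigma k, tau k} :
          Set (Equiv.Perm (Fin (12 * k + 6)))) :=
        mul_mem (mul_mem (inv_mem hg0mem) hh) hg0mem
      have key : (⇑h) '' B' = (⇑gx⁻¹) '' ((⇑(gx⁻¹⁻¹ * h * gx⁻¹)) '' B) := by
        rw [hB'def, Set.image_image, Set.image_image]
        apply Set.image_congr'
        intro a
        simp
      rcases hB (gx⁻¹⁻¹ * h * gx⁻¹) hw with he | hd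
      · left
        rw [key, he]
      · right
        rw [key, hB'def]
        exact (Set.disjoint_image_iff (Equiv.injective _)).mpr hd
    have rule : ∀ h : Equiv.Perm (Fin (12 * k + 6)),
        h ∈ Subgroup.closure ({sigma k, tau k} : Set (Equiv.Perm (Fin (12 * k + 6)))) →
        h (pt k 0) = pt k 0 → ∀ z ∈ B', h z ∈ B' := by
      intro h hh hfix z hz
      rcases hB' h hh with he | hd
      · rw [← he]
        exact ⟨z, hz, rfl⟩
      · exact absurd h0' (Set.disjoint_left.mp hd ⟨pt k 0, h0', hfix⟩)
    have hσB : ∀ z ∈ B', sigma k z ∈ B' := rule _ hσmem (sg_fix k (by omega))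
    have huB : ∀ z ∈ B', (fourP k ^ 2) z ∈ B' := rule _ humem (ufix0 k)
    have hvB : ∀ z ∈ B', vperm k z ∈ B' := rule _ hvmem (vfix0 k)
    have hyB' : gx⁻¹ y ∈ B' := ⟨y, hyB, rfl⟩
    have hy0 : (gx⁻¹ y).val ≠ 0 := by
      intro hc
      apply hxy
      apply gx⁻¹.injective
      rw [hg0x, ← pt_val_self k (gx⁻¹ y), hc]
    have hwalk := walk k hk B' hσB huB hvB h0' (a := (gx⁻¹ y).val) (gx⁻¹ y).isLt hy0
      (by rw [pt_val_self]; exact hyB')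
    apply Set.eq_univ_of_forall
    intro w
    obtain ⟨b, hb, hbe⟩ := hwalk (gx⁻¹ w)
    rwa [← gx⁻¹.injective hbe]
end

section
/- There exist permutations σ and τ of a set of 30 elements such that: σ is a product of 14 disjoint transpositions (with exactly 2 fixed points), τ is a product of one 9-cycle and seven disjoint 3-cycles (with no fixed points), the product σ·τ is a product of one 2-cycle and seven disjoint 4-cycles (with no fixed points), the subgroup G generated by σ and τ acts transitively on the 30 points, but this action of G is imprimitive: it admits a nontrivial block system consisting of three blocks of size 10. -/
open Equiv Equiv.Perm

set_option maxRecDepth 100000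
set_option maxHeartbeats 2000000

instance : DecidableRel (Equiv.Perm.Disjoint (α := Fin 30)) :=
  fun f g => decidable_of_iff (∀ x, f x = x ∨ g x = x) Iff.rfl

def sigL : List (Equiv.Perm (Fin 30)) := [List.formPerm [0,10], List.formPerm [1,11], List.formPerm [2,12], List.formPerm [3,13], List.formPerm [4,14], List.formPerm [5,15], List.formPerm [6,16], List.formPerm [7,17], List.formPerm [8,18], List.formPerm [9,19], List.formPerm [20,21], List.formPerm [22,23], List.formPerm [24,25], List.formPerm [26,27]]
def tauL : List (Equiv.Perm (Fin 30)) := [List.formPerm [0,14,28], List.formPerm [1,15,20], List.formPerm [2,19,23], List.formPerm [3,17,25,4,12,29,8,16,26], List.formPerm [5,11,27], List.formPerm [6,13,21], List.formPerm [7,18,22], List.formPerm [9,10,24]]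
def stL : List (Equiv.Perm (Fin 30)) := [List.formPerm [0,4,2,9], List.formPerm [1,5], List.formPerm [3,7,8,6], List.formPerm [10,25,14,28], List.formPerm [11,26,13,20], List.formPerm [12,29,18,23], List.formPerm [15,21,16,27], List.formPerm [17,24,19,22]]

def sg : Equiv.Perm (Fin 30) := sigL.prod
def tg : Equiv.Perm (Fin 30) := tauL.prod

theorem sg_ct : sg.cycleType = Multiset.replicate 14 2 := by
  rw [show sg = sigL.prod from rfl, cycleType_eq sigL rfl ?_ ?_]
  · decide
  · intro τ hτ
    fin_cases hτ <;> exact List.isCycle_formPerm (by decide) (by decide)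
  · decide

theorem tg_ct : tg.cycleType = 9 ::ₘ Multiset.replicate 7 3 := by
  rw [show tg = tauL.prod from rfl, cycleType_eq tauL rfl ?_ ?_]
  · decide
  · intro τ hτ
    fin_cases hτ <;> exact List.isCycle_formPerm (by decide) (by decide)
  · decide

theorem st_eq : stL.prod = sg * tg := Equiv.ext (by decide)

theorem st_ct : (sg * tg).cycleType = 2 ::ₘ Multiset.replicate 7 4 := by
  rw [cycleType_eq stL st_eq ?_ ?_]
  · decide
  · intro τ hτ
    fin_cases hτ <;> exact List.isCycle_formPerm (by decide) (by decide)
  · decide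

theorem sg_fix : (Finset.univ.filter fun x => sg x = x).card = 2 := by decide
theorem tg_fix : (Finset.univ.filter fun x => tg x = x).card = 0 := by decide
theorem st_fix : (Finset.univ.filter fun x => (sg * tg) x = x).card = 0 := by decide

theorem key : ∀ x : Fin 30, ∃ g ∈ Subgroup.closure ({sg, tg} : Set (Equiv.Perm (Fin 30))),
    g 0 = x := by
  have hs : sg ∈ Subgroup.closure ({sg, tg} : Set (Equiv.Perm (Fin 30))) :=
    Subgroup.subset_closure (Set.mem_insert _ _)
  have ht : tg ∈ Subgroup.closure ({sg, tg} : Set (Equiv.Perm (Fin 30))) :=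
    Subgroup.subset_closure (Set.mem_insert_of_mem _ rfl)
  intro x
  fin_cases x
  · exact ⟨(1 : Equiv.Perm (Fin 30)), one_mem _, by decide⟩
  · exact ⟨tg * sg * tg * sg * tg⁻¹ * tg⁻¹ * sg * tg * sg, mul_mem (mul_mem (mul_mem (mul_mem (mul_mem (mul_mem (mul_mem (mul_mem (ht) (hs)) (ht)) (hs)) (inv_mem ht)) (inv_mem ht)) (hs)) (ht)) (hs), by decide⟩
  · exact ⟨tg⁻¹ * sg * tg⁻¹ * sg, mul_mem (mul_mem (mul_mem (inv_mem ht) (hs)) (inv_mem ht)) (hs), by decide⟩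
  · exact ⟨tg⁻¹ * tg⁻¹ * sg * tg * sg, mul_mem (mul_mem (mul_mem (mul_mem (inv_mem ht) (inv_mem ht)) (hs)) (ht)) (hs), by decide⟩
  · exact ⟨sg * tg, mul_mem (hs) (ht), by decide⟩
  · exact ⟨tg * sg * tg⁻¹ * tg⁻¹ * tg⁻¹ * sg * tg * sg, mul_mem (mul_mem (mul_mem (mul_mem (mul_mem (mul_mem (mul_mem (ht) (hs)) (inv_mem ht)) (inv_mem ht)) (inv_mem ht)) (hs)) (ht)) (hs), by decide⟩
  · exact ⟨tg⁻¹ * sg * tg⁻¹ * tg⁻¹ * sg * tg * sg, mul_mem (mul_mem (mul_mem (mul_mem (mul_mem (mul_mem (inv_mem ht) (hs)) (inv_mem ht)) (inv_mem ht)) (hs)) (ht)) (hs), by decide⟩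
  · exact ⟨sg * tg⁻¹ * sg * tg * sg, mul_mem (mul_mem (mul_mem (mul_mem (hs) (inv_mem ht)) (hs)) (ht)) (hs), by decide⟩
  · exact ⟨tg * tg * tg * sg * tg, mul_mem (mul_mem (mul_mem (mul_mem (ht) (ht)) (ht)) (hs)) (ht), by decide⟩
  · exact ⟨tg⁻¹ * sg, mul_mem (inv_mem ht) (hs), by decide⟩
  · exact ⟨sg, hs, by decide⟩
  · exact ⟨tg⁻¹ * sg * tg⁻¹ * tg⁻¹ * tg⁻¹ * sg * tg * sg, mul_mem (mul_mem (mul_mem (mul_mem (mul_mem (mul_mem (mul_mem (inv_mem ht) (hs)) (inv_mem ht)) (inv_mem ht)) (inv_mem ht)) (hs)) (ht)) (hs), by decide⟩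
  · exact ⟨tg * sg * tg, mul_mem (mul_mem (ht) (hs)) (ht), by decide⟩
  · exact ⟨sg * tg⁻¹ * tg⁻¹ * sg * tg * sg, mul_mem (mul_mem (mul_mem (mul_mem (mul_mem (hs) (inv_mem ht)) (inv_mem ht)) (hs)) (ht)) (hs), by decide⟩
  · exact ⟨tg, ht, by decide⟩
  · exact ⟨tg⁻¹ * sg * tg * sg * tg⁻¹ * tg⁻¹ * sg * tg * sg, mul_mem (mul_mem (mul_mem (mul_mem (mul_mem (mul_mem (mul_mem (mul_mem (inv_mem ht) (hs)) (ht)) (hs)) (inv_mem ht)) (inv_mem ht)) (hs)) (ht)) (hs), by decide⟩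
  · exact ⟨tg * tg * tg * tg * sg * tg, mul_mem (mul_mem (mul_mem (mul_mem (mul_mem (ht) (ht)) (ht)) (ht)) (hs)) (ht), by decide⟩
  · exact ⟨tg⁻¹ * sg * tg * sg, mul_mem (mul_mem (mul_mem (inv_mem ht) (hs)) (ht)) (hs), by decide⟩
  · exact ⟨tg * sg * tg⁻¹ * sg * tg * sg, mul_mem (mul_mem (mul_mem (mul_mem (mul_mem (ht) (hs)) (inv_mem ht)) (hs)) (ht)) (hs), by decide⟩
  · exact ⟨sg * tg⁻¹ * sg, mul_mem (mul_mem (hs) (inv_mem ht)) (hs), by decide⟩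
  · exact ⟨sg * tg * sg * tg⁻¹ * tg⁻¹ * sg * tg * sg, mul_mem (mul_mem (mul_mem (mul_mem (mul_mem (mul_mem (mul_mem (hs) (ht)) (hs)) (inv_mem ht)) (inv_mem ht)) (hs)) (ht)) (hs), by decide⟩
  · exact ⟨tg * sg * tg⁻¹ * tg⁻¹ * sg * tg * sg, mul_mem (mul_mem (mul_mem (mul_mem (mul_mem (mul_mem (ht) (hs)) (inv_mem ht)) (inv_mem ht)) (hs)) (ht)) (hs), by decide⟩
  · exact ⟨sg * tg * sg * tg⁻¹ * sg, mul_mem (mul_mem (mul_mem (mul_mem (hs) (ht)) (hs)) (inv_mem ht)) (hs), by decide⟩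
  · exact ⟨tg * sg * tg⁻¹ * sg, mul_mem (mul_mem (mul_mem (ht) (hs)) (inv_mem ht)) (hs), by decide⟩
  · exact ⟨tg * sg, mul_mem (ht) (hs), by decide⟩
  · exact ⟨sg * tg * sg, mul_mem (mul_mem (hs) (ht)) (hs), by decide⟩
  · exact ⟨tg⁻¹ * tg⁻¹ * tg⁻¹ * sg * tg * sg, mul_mem (mul_mem (mul_mem (mul_mem (mul_mem (inv_mem ht) (inv_mem ht)) (inv_mem ht)) (hs)) (ht)) (hs), by decide⟩
  · exact ⟨sg * tg⁻¹ * tg⁻¹ * tg⁻¹ * sg * tg * sg, mul_mem (mul_mem (mul_mem (mul_mem (mul_mem (mul_mem (hs) (inv_mem ht)) (inv_mem ht)) (inv_mem ht)) (hs)) (ht)) (hs), by decide⟩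
  · exact ⟨tg⁻¹, inv_mem ht, by decide⟩
  · exact ⟨tg * tg * sg * tg, mul_mem (mul_mem (mul_mem (ht) (ht)) (hs)) (ht), by decide⟩
theorem trans30 : ∀ x y : Fin 30,
    ∃ g ∈ Subgroup.closure ({sg, tg} : Set (Equiv.Perm (Fin 30))), g x = y := by
  intro x y
  obtain ⟨gx, hgx, hx⟩ := key x
  obtain ⟨gy, hgy, hy⟩ := key y
  refine ⟨gy * gx⁻¹, mul_mem hgy (inv_mem hgx), ?_⟩
  have : gx⁻¹ x = 0 := by rw [← hx]; simp
  simp [Equiv.Perm.mul_apply, this, hy]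

def f30 : Fin 30 → Fin 3 := fun x => ⟨x / 10, by omega⟩

def HH : Subgroup (Equiv.Perm (Fin 30)) where
  carrier := {g | ∃ π : Equiv.Perm (Fin 3), ∀ x, f30 (g x) = π (f30 x)}
  one_mem' := ⟨1, fun _ => rfl⟩
  mul_mem' := by
    rintro a b ⟨π, hπ⟩ ⟨ρ, hρ⟩
    exact ⟨ρ.trans π, fun x => by simp [Equiv.Perm.mul_apply, hπ, hρ]⟩
  inv_mem' := by
    rintro a ⟨π, hπ⟩
    refine ⟨π⁻¹, fun x => ?_⟩
    have := hπ (a⁻¹ x)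
    rw [← Equiv.Perm.mul_apply, mul_inv_cancel, Equiv.Perm.one_apply] at this
    rw [this]
    simp

theorem sg_mem : sg ∈ HH := ⟨Equiv.swap 0 1, by decide⟩
theorem tg_mem : tg ∈ HH := ⟨Equiv.mk ![1,2,0] ![2,0,1] (by decide) (by decide), by decide⟩

theorem closure_le_HH :
    Subgroup.closure ({sg, tg} : Set (Equiv.Perm (Fin 30))) ≤ HH := by
  rw [Subgroup.closure_le]
  rintro g (rfl | rfl)
  · exact sg_mem
  · exact tg_mem

def BB : Fin 3 → Set (Fin 30) := fun i => f30 ⁻¹' {i}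

theorem BB_finset (i : Fin 3) : BB i = ↑(Finset.univ.filter fun x => f30 x = i) := by
  ext x; simp [BB]

theorem BB_ncard (i : Fin 3) : (BB i).ncard = 10 := by
  rw [BB_finset, Set.ncard_coe_finset]
  fin_cases i <;> decide

theorem BB_disj : ∀ i j : Fin 3, i ≠ j → Disjoint (BB i) (BB j) := by
  intro i j hij
  rw [Set.disjoint_left]
  rintro x hx hx'
  exact hij (hx.symm.trans hx')

theorem BB_union : (⋃ i, BB i) = Set.univ := by
  ext x
  simp only [Set.mem_iUnion, Set.mem_univ, iff_true]
  exact ⟨f30 x, rfl⟩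

theorem BB_image {g : Equiv.Perm (Fin 30)} {π : Equiv.Perm (Fin 3)}
    (hπ : ∀ x, f30 (g x) = π (f30 x)) (i : Fin 3) : ⇑g '' BB i = BB (π i) := by
  ext y
  constructor
  · rintro ⟨x, hx, rfl⟩
    have : f30 x = i := hx
    simp only [BB, Set.mem_preimage, Set.mem_singleton_iff, hπ x, this]
  · intro hy
    refine ⟨g⁻¹ y, ?_, by simp⟩
    have h2 := hπ (g⁻¹ y)
    rw [← Equiv.Perm.mul_apply, mul_inv_cancel, Equiv.Perm.one_apply] at h2
    have : π (f30 (g⁻¹ y)) = π i := by rw [← h2]; exact hy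
    exact π.injective this

theorem BB_blocks : ∀ i, ∀ g ∈ Subgroup.closure ({sg, tg} : Set (Equiv.Perm (Fin 30))),
    ⇑g '' BB i = BB i ∨ Disjoint (⇑g '' BB i) (BB i) := by
  intro i g hg
  obtain ⟨π, hπ⟩ := closure_le_HH hg
  rw [BB_image hπ i]
  by_cases h : π i = i
  · left; rw [h]
  · right; exact BB_disj _ _ h

/-- There exist permutations `σ, τ` of `30` points such that `σ` is a product of `14`
disjoint transpositions (with exactly `2` fixed points), `τ` is a product of one 9-cycle and
seven disjoint 3-cycles (with no fixed points), `σ·τ` is a product of one 2-cycle and seven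
disjoint 4-cycles (with no fixed points), the subgroup `G = ⟨σ, τ⟩` acts transitively, but
the action is imprimitive: it admits a nontrivial block system consisting of three blocks of
size `10` (each mapped by every element of `G` either to itself or to a disjoint set). -/
theorem stmt_17 :
    ∃ σ τ : Equiv.Perm (Fin 30),
      σ.cycleType = Multiset.replicate 14 2 ∧
      (Finset.univ.filter fun x => σ x = x).card = 2 ∧
      τ.cycleType = 9 ::ₘ Multiset.replicate 7 3 ∧
      (Finset.univ.filter fun x => τ x = x).card = 0 ∧
      (σ * τ).cycleType = 2 ::ₘ Multiset.replicate 7 4 ∧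
      (Finset.univ.filter fun x => (σ * τ) x = x).card = 0 ∧
      (∀ x y : Fin 30,
        ∃ g ∈ Subgroup.closure ({σ, τ} : Set (Equiv.Perm (Fin 30))), g x = y) ∧
      ∃ B : Fin 3 → Set (Fin 30),
        (∀ i, (B i).ncard = 10) ∧
        (∀ i j, i ≠ j → Disjoint (B i) (B j)) ∧
        (⋃ i, B i) = Set.univ ∧
        (∀ i, ∀ g ∈ Subgroup.closure ({σ, τ} : Set (Equiv.Perm (Fin 30))),
          ⇑g '' B i = B i ∨ Disjoint (⇑g '' B i) (B i)) := by
  exact ⟨sg, tg, sg_ct, sg_fix, tg_ct, tg_fix, st_ct, st_fix, trans30,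
    BB, BB_ncard, BB_disj, BB_union, BB_blocks⟩
end
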